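/- If the function class {Φ} is a universal approximator of continuous functions on a compact domain K ⊂ V and the frame F is bounded on K (∃ c > 0 with ‖ρ₂(g)‖_op ≤ c for all g ∈ F(X), X ∈ K) and G-equivariant with |F(X)| = m constant, then for any continuous G-equivariant target f and ε > 0, choosing Φ with sup_{X ∈ K'} ‖Φ(X) − f(X)‖ ≤ ε/c on the saturated domain K' = ∪_{X∈K} {ρ₁(g)⁻¹X : g ∈ F(X)} gives sup_{X ∈ K} ‖⟨Φ⟩_F(X) − f(X)‖ ≤ ε. -/
import Mathlib


open scoped BigOperators

/-- Frame averaging with a normed output space and continuous representation. -/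
noncomputable def frameAvg {G V W : Type*} [Group G]
    [NormedAddCommGroup V] [NormedSpace ℝ V]
    [NormedAddCommGroup W] [NormedSpace ℝ W]
    (ρ₁ : G →* (V ≃ₗ[ℝ] V)) (ρ₂ : G →* (W ≃L[ℝ] W))
    (F : V → Finset G) (Φ : V → W) (X : V) : W :=
  ((F X).card : ℝ)⁻¹ • ∑ g ∈ F X, ρ₂ g (Φ ((ρ₁ g)⁻¹ X))

/-- Expressivity preservation: if the frame `F` is bounded on `K` by `c`,
`G`-equivariant, with `|F(X)| = m` constant, and `Φ` approximates the
continuous `G`-equivariant target `f` within `ε/c` on the saturated domain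
`K' = ⋃_{X∈K} {ρ₁(g)⁻¹X : g ∈ F(X)}`, then `⟨Φ⟩_F` approximates `f`
within `ε` on `K`. -/
theorem frameAvg_universal_approx {G V W : Type*} [Group G] [DecidableEq G]
    [NormedAddCommGroup V] [NormedSpace ℝ V]
    [NormedAddCommGroup W] [NormedSpace ℝ W]
    (ρ₁ : G →* (V ≃ₗ[ℝ] V)) (ρ₂ : G →* (W ≃L[ℝ] W))
    (F : V → Finset G) (K : Set V) (hK : IsCompact K)
    (m : ℕ) (hm : 0 < m) (hcard : ∀ X : V, (F X).card = m)
    (hF : ∀ (g : G) (X : V), F (ρ₁ g X) = (F X).image (fun h => g * h))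
    (c : ℝ) (hc : 0 < c)
    (hbound : ∀ X ∈ K, ∀ g ∈ F X, ‖((ρ₂ g : W ≃L[ℝ] W) : W →L[ℝ] W)‖ ≤ c)
    (f : V → W) (hfcont : Continuous f)
    (hfequiv : ∀ (g : G) (X : V), f (ρ₁ g X) = ρ₂ g (f X))
    (ε : ℝ) (Φ : V → W)
    (hΦ : ∀ Y ∈ ⋃ X ∈ K, {Y : V | ∃ g ∈ F X, Y = (ρ₁ g)⁻¹ X},
        ‖Φ Y - f Y‖ ≤ ε / c) :
    ∀ X ∈ K, ‖frameAvg ρ₁ ρ₂ F Φ X - f X‖ ≤ ε := by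
  intro X hX
  have hm' : (0:ℝ) < (m:ℝ) := by exact_mod_cast hm
  have hterm : ∀ g ∈ F X, ρ₂ g (f ((ρ₁ g)⁻¹ X)) = f X := by
    intro g hg
    rw [← hfequiv g ((ρ₁ g)⁻¹ X)]
    congr 1
    exact (ρ₁ g).apply_symm_apply X
  have key : frameAvg ρ₁ ρ₂ F Φ X - f X
      = (m:ℝ)⁻¹ • ∑ g ∈ F X, ρ₂ g (Φ ((ρ₁ g)⁻¹ X) - f ((ρ₁ g)⁻¹ X)) := by
    have hfX : f X = (m:ℝ)⁻¹ • ∑ g ∈ F X, ρ₂ g (f ((ρ₁ g)⁻¹ X)) := by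
      rw [Finset.sum_congr rfl hterm, Finset.sum_const, hcard X]
      rw [← Nat.cast_smul_eq_nsmul ℝ, smul_smul, inv_mul_cancel₀ hm'.ne', one_smul]
    rw [frameAvg, hcard X]
    conv_lhs => rw [hfX]
    rw [← smul_sub, ← Finset.sum_sub_distrib]
    congr 1
    exact Finset.sum_congr rfl fun g hg => (map_sub (ρ₂ g : W →L[ℝ] W) _ _).symm
  rw [key]
  have hbnd : ∀ g ∈ F X, ‖(ρ₂ g) (Φ ((ρ₁ g)⁻¹ X) - f ((ρ₁ g)⁻¹ X))‖ ≤ ε := by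
    intro g hg
    have hY : ((ρ₁ g)⁻¹ X) ∈ ⋃ X ∈ K, {Y : V | ∃ g ∈ F X, Y = (ρ₁ g)⁻¹ X} := by
      exact Set.mem_biUnion hX ⟨g, hg, rfl⟩
    calc ‖(ρ₂ g) (Φ ((ρ₁ g)⁻¹ X) - f ((ρ₁ g)⁻¹ X))‖
        ≤ ‖((ρ₂ g : W ≃L[ℝ] W) : W →L[ℝ] W)‖ * ‖Φ ((ρ₁ g)⁻¹ X) - f ((ρ₁ g)⁻¹ X)‖ :=
          (ρ₂ g : W →L[ℝ] W).le_opNorm _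
      _ ≤ c * (ε / c) := by
          apply mul_le_mul (hbound X hX g hg) (hΦ _ hY) (norm_nonneg _) hc.le
      _ = ε := by field_simp
  calc ‖(m:ℝ)⁻¹ • ∑ g ∈ F X, ρ₂ g (Φ ((ρ₁ g)⁻¹ X) - f ((ρ₁ g)⁻¹ X))‖
      = (m:ℝ)⁻¹ * ‖∑ g ∈ F X, ρ₂ g (Φ ((ρ₁ g)⁻¹ X) - f ((ρ₁ g)⁻¹ X))‖ := by
        rw [norm_smul, Real.norm_eq_abs, abs_of_pos (by positivity)]
    _ ≤ (m:ℝ)⁻¹ * ∑ _g ∈ F X, ε := by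
        gcongr
        exact norm_sum_le_of_le _ hbnd
    _ = ε := by rw [Finset.sum_const, hcard X, nsmul_eq_mul]; field_simp
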